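/- Let μ satisfy a Poincaré inequality with constant C: Var_μ(h) ≤ C∫‖∇h‖² dμ for all suitable h. If f has ∫f dμ = 0 and ‖∇f(t)‖ ≤ a < 2/√C, then the functional entropy satisfies Ent_μ(exp f) ≤ (a²C/2)·((2+a√C)/(2-a√C))² · ∫ exp(f) dμ, where Ent_μ(exp f) = ∫ f e^f dμ - (∫ e^f dμ) log(∫ e^f dμ). -/

import Mathlib

open MeasureTheory Real Filter Topology

variable {m : ℕ}

lemma sumD_comp (f : (Fin m → ℝ) → ℝ) (hf : Differentiable ℝ f)
    (φ : ℝ → ℝ) (hφ : Differentiable ℝ φ) (t : Fin m → ℝ) :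
    ∑ i : Fin m, (fderiv ℝ (fun t => φ (f t)) t (Pi.single i 1)) ^ 2
      = (deriv φ (f t)) ^ 2 * ∑ i : Fin m, (fderiv ℝ f t (Pi.single i 1)) ^ 2 := by
  have h : fderiv ℝ (fun t => φ (f t)) t = deriv φ (f t) • fderiv ℝ f t :=
    (((hφ (f t)).hasDerivAt).comp_hasFDerivAt t (hf t).hasFDerivAt).fderiv
  rw [h, Finset.mul_sum]
  simp [mul_pow]

lemma exp_half_sq (x : ℝ) : Real.exp (x/2) ^ 2 = Real.exp x := by
  rw [sq, ← Real.exp_add, add_halves]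

lemma dphi1 (x : ℝ) : HasDerivAt (fun x : ℝ => Real.exp (x/2)) (Real.exp (x/2) * (1/2)) x :=
  ((hasDerivAt_id x).div_const 2).exp

lemma dphi2 (x : ℝ) : HasDerivAt (fun x : ℝ => x * Real.exp (x/2))
    ((1 + x/2) * Real.exp (x/2)) x := by
  have h := (hasDerivAt_id x).mul (dphi1 x)
  refine h.congr_deriv ?_
  simp [id]
  ring

lemma diff_phi1 : Differentiable ℝ (fun x : ℝ => Real.exp (x/2)) :=
  fun x => (dphi1 x).differentiableAt

lemma diff_phi2 : Differentiable ℝ (fun x : ℝ => x * Real.exp (x/2)) :=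
  fun x => (dphi2 x).differentiableAt

lemma cs_integral {α : Type*} [MeasurableSpace α] (μ : Measure α)
    (u v : α → ℝ) (hu : MemLp u 2 μ) (hv : MemLp v 2 μ) :
    (∫ x, u x * v x ∂μ) ^ 2 ≤ (∫ x, u x ^ 2 ∂μ) * (∫ x, v x ^ 2 ∂μ) := by
  have h2 : (ENNReal.ofReal (2:ℝ)) = 2 := by norm_num
  have key : ∫ x, |u x| * |v x| ∂μ
      ≤ (∫ x, |u x| ^ (2:ℝ) ∂μ) ^ ((1:ℝ)/2) * (∫ x, |v x| ^ (2:ℝ) ∂μ) ^ ((1:ℝ)/2) := by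
    refine integral_mul_le_Lp_mul_Lq_of_nonneg ⟨by norm_num, by norm_num, by norm_num⟩
      (Filter.Eventually.of_forall fun x => abs_nonneg _)
      (Filter.Eventually.of_forall fun x => abs_nonneg _) ?_ ?_
    · rw [h2]; exact hu.abs
    · rw [h2]; exact hv.abs
  have hu2 : ∫ x, |u x| ^ (2:ℝ) ∂μ = ∫ x, u x ^ 2 ∂μ := by
    congr 1; ext x
    rw [show ((2:ℝ)) = ((2:ℕ):ℝ) by norm_num, Real.rpow_natCast, sq_abs]
  have hv2 : ∫ x, |v x| ^ (2:ℝ) ∂μ = ∫ x, v x ^ 2 ∂μ := by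
    congr 1; ext x
    rw [show ((2:ℝ)) = ((2:ℕ):ℝ) by norm_num, Real.rpow_natCast, sq_abs]
  have habs : |∫ x, u x * v x ∂μ| ≤ ∫ x, |u x| * |v x| ∂μ := by
    simpa [abs_mul] using norm_integral_le_integral_norm (f := fun x => u x * v x) (μ := μ)
  have hA : (0:ℝ) ≤ ∫ x, u x ^ 2 ∂μ := integral_nonneg fun x => sq_nonneg _
  have hB : (0:ℝ) ≤ ∫ x, v x ^ 2 ∂μ := integral_nonneg fun x => sq_nonneg _
  have h1 : (∫ x, u x * v x ∂μ)^2 ≤ (∫ x, |u x| * |v x| ∂μ)^2 := by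
    rw [← sq_abs (∫ x, u x * v x ∂μ)]
    apply pow_le_pow_left₀ (abs_nonneg _) habs
  refine h1.trans ?_
  rw [hu2, hv2] at key
  calc (∫ x, |u x| * |v x| ∂μ)^2
      ≤ ((∫ x, u x ^ 2 ∂μ) ^ ((1:ℝ)/2) * (∫ x, v x ^ 2 ∂μ) ^ ((1:ℝ)/2))^2 := by
        apply pow_le_pow_left₀ (integral_nonneg fun x => mul_nonneg (abs_nonneg _) (abs_nonneg _)) key
    _ = (∫ x, u x ^ 2 ∂μ) * (∫ x, v x ^ 2 ∂μ) := by
        rw [mul_pow, ← Real.rpow_natCast (_ ^ ((1:ℝ)/2)) 2, ← Real.rpow_natCast (_ ^ ((1:ℝ)/2)) 2,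
          ← Real.rpow_mul hA, ← Real.rpow_mul hB]
        norm_num

lemma quad (β x e : ℝ) (hβ0 : 0 < β) (hβ2 : β < 2) (hx : 0 ≤ x) (he : 0 ≤ e)
    (h1 : (4-β^2)*x^2 ≤ (β^4+4*β^2)*e^2 + 4*β^2*(x*e)) :
    (2-β)*x ≤ β*(2+β)*e := by
  by_contra hcon
  push_neg at hcon
  have h2β : (0:ℝ) < 2 - β := by linarith
  have h4 : (0:ℝ) < 2 + β := by linarith
  have hlin : β*(2+β)^2*e < (4-β^2)*x := by nlinarith [mul_lt_mul_of_pos_left hcon h4]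
  have hA : β*e*(β^2+4) < (4-β^2)*x - 4*β^2*e := by
    nlinarith [mul_nonneg (mul_nonneg hβ0.le hβ0.le) he]
  have hxe2 : β*e < x := by nlinarith [mul_nonneg (mul_nonneg hβ0.le he) h2β.le]
  have hkey := mul_lt_mul'' hxe2 hA (mul_nonneg hβ0.le he)
    (mul_nonneg (mul_nonneg hβ0.le he) (by positivity))
  nlinarith [hkey]

set_option maxHeartbeats 1000000 in
lemma BL (μ : Measure (Fin m → ℝ)) [IsProbabilityMeasure μ]
    (C : ℝ) (hC : 0 < C)
    (hP : ∀ h : (Fin m → ℝ) → ℝ, Differentiable ℝ h → MemLp h 2 μ →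
      (∫ t, (h t) ^ 2 ∂μ) - (∫ t, h t ∂μ) ^ 2
        ≤ C * ∫ t, (∑ i : Fin m, (fderiv ℝ h t (Pi.single i 1)) ^ 2) ∂μ)
    (g : (Fin m → ℝ) → ℝ) (hg : Differentiable ℝ g)
    (hmean : (∫ t, g t ∂μ) = 0)
    (c : ℝ) (hc : 0 < c) (hβc : c * Real.sqrt C < 2)
    (hgrad : ∀ t, (∑ i : Fin m, (fderiv ℝ g t (Pi.single i 1)) ^ 2) ≤ c ^ 2)
    (hgL2 : MemLp g 2 μ) (hg2 : ∫ t, g t ^ 2 ∂μ ≤ C * c ^ 2)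
    (hEg : Integrable (fun t => Real.exp (g t)) μ)
    (hKi : Integrable (fun t => g t ^ 2 * Real.exp (g t)) μ) :
    ∫ t, g t ^ 2 * Real.exp (g t) ∂μ
      ≤ C * c ^ 2 * ((2 + c * Real.sqrt C) / (2 - c * Real.sqrt C)) ^ 2
          * ∫ t, Real.exp (g t) ∂μ := by
  have hb0 : 0 < Real.sqrt C := Real.sqrt_pos.2 hC
  obtain ⟨b, hbdef⟩ : ∃ x : ℝ, x = Real.sqrt C := ⟨_, rfl⟩
  obtain ⟨β, hβdef⟩ : ∃ x : ℝ, x = c * b := ⟨_, rfl⟩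
  obtain ⟨γ, hγdef⟩ : ∃ x : ℝ, x = C * c ^ 2 := ⟨_, rfl⟩
  obtain ⟨Eg, hEgdef⟩ : ∃ x : ℝ, x = ∫ t, Real.exp (g t) ∂μ := ⟨_, rfl⟩
  obtain ⟨m0, hm0def⟩ : ∃ x : ℝ, x = ∫ t, Real.exp (g t / 2) ∂μ := ⟨_, rfl⟩
  obtain ⟨K2, hK2def⟩ : ∃ x : ℝ, x = ∫ t, g t ^ 2 * Real.exp (g t) ∂μ := ⟨_, rfl⟩
  obtain ⟨M1, hM1def⟩ : ∃ x : ℝ, x = ∫ t, g t * Real.exp (g t) ∂μ := ⟨_, rfl⟩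
  obtain ⟨T, hTdef⟩ : ∃ x : ℝ, x = ∫ t, g t * Real.exp (g t / 2) ∂μ := ⟨_, rfl⟩
  rw [← hbdef] at hb0 hβc ⊢
  rw [← hβdef] at hβc ⊢
  rw [← hγdef] at hg2 ⊢
  rw [← hEgdef, ← hK2def]
  have hCb : b ^ 2 = C := by rw [hbdef]; exact Real.sq_sqrt hC.le
  have hβ0 : 0 < β := by rw [hβdef]; exact mul_pos hc hb0
  have hβ2 : β < 2 := hβc
  have hγβ : γ = β ^ 2 := by rw [hγdef, hβdef, ← hCb]; ring
  have hγ0 : 0 ≤ γ := by rw [hγdef]; positivity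
  -- continuity / measurability
  have hgc : Continuous g := hg.continuous
  have asm_half : AEStronglyMeasurable (fun t => Real.exp (g t / 2)) μ :=
    (Real.continuous_exp.comp (hgc.div_const 2)).aestronglyMeasurable
  have asm_ghalf : AEStronglyMeasurable (fun t => g t * Real.exp (g t / 2)) μ :=
    (hgc.mul (Real.continuous_exp.comp (hgc.div_const 2))).aestronglyMeasurable
  -- integrability kit
  have hgint : Integrable g μ := hgL2.integrable one_le_two
  have exp_half_le : ∀ x : ℝ, Real.exp (x/2) ≤ 1 + Real.exp x := by
    intro x
    rcases le_total x 0 with h | h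
    · have h1 : Real.exp (x/2) ≤ 1 := by
        rw [← Real.exp_zero]; exact Real.exp_le_exp.2 (by linarith)
      have := Real.exp_pos x; linarith
    · have h1 : Real.exp (x/2) ≤ Real.exp x := Real.exp_le_exp.2 (by linarith)
      linarith
  have i_half : Integrable (fun t => Real.exp (g t / 2)) μ := by
    refine Integrable.mono' ((integrable_const (1:ℝ)).add hEg) asm_half ?_
    filter_upwards with t
    rw [Real.norm_eq_abs, abs_of_nonneg (Real.exp_pos _).le]
    exact exp_half_le (g t)
  have hsq_half : ∀ t, Real.exp (g t / 2) ^ 2 = Real.exp (g t) := fun t => exp_half_sq (g t)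
  have hhalfL2 : MemLp (fun t => Real.exp (g t / 2)) 2 μ := by
    refine (memLp_two_iff_integrable_sq asm_half).2 ?_
    simpa only [hsq_half] using hEg
  have hgehalf_sq : ∀ t, (g t * Real.exp (g t / 2)) ^ 2 = g t ^ 2 * Real.exp (g t) := by
    intro t; rw [mul_pow, exp_half_sq]
  have hgehalfL2 : MemLp (fun t => g t * Real.exp (g t / 2)) 2 μ := by
    refine (memLp_two_iff_integrable_sq asm_ghalf).2 ?_
    simpa only [hgehalf_sq] using hKi
  have i_gehalf : Integrable (fun t => g t * Real.exp (g t / 2)) μ :=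
    hgehalfL2.integrable one_le_two
  have bnd1 : Integrable (fun t => (1/2 : ℝ) * (Real.exp (g t) + g t ^ 2 * Real.exp (g t))) μ := by
    simpa using (hEg.add hKi).const_mul (1/2 : ℝ)
  have i_ge : Integrable (fun t => g t * Real.exp (g t)) μ := by
    refine Integrable.mono' bnd1
      ((hgc.mul (Real.continuous_exp.comp hgc)).aestronglyMeasurable) ?_
    filter_upwards with t
    rw [Real.norm_eq_abs, abs_mul, abs_of_nonneg (Real.exp_pos _).le]
    have h1 : |g t| ≤ (1 + g t ^ 2)/2 := by nlinarith [sq_nonneg (|g t| - 1), sq_abs (g t)]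
    have h2 := (Real.exp_pos (g t)).le
    nlinarith [mul_le_mul_of_nonneg_right h1 h2]
  have hEg1 : 1 ≤ Eg := by
    rw [hEgdef]
    have h1 : (1:ℝ) = ∫ t, (1 + g t) ∂μ := by
      rw [integral_add (integrable_const 1) hgint, hmean]; simp
    rw [h1]
    have hadd : Integrable (fun t => 1 + g t) μ := by
      simpa using (integrable_const (1:ℝ)).add hgint
    exact integral_mono hadd hEg (fun t => by
      have := Real.add_one_le_exp (g t); linarith)
  have hEgnn : (0:ℝ) ≤ Eg := le_trans zero_le_one hEg1
  have hK2nn : (0:ℝ) ≤ K2 := by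
    rw [hK2def]
    exact integral_nonneg fun t => mul_nonneg (sq_nonneg _) (Real.exp_pos _).le
  -- derivative computations
  have hfd1 : ∀ t, fderiv ℝ (fun t => Real.exp (g t / 2)) t
      = (Real.exp (g t / 2) * (1/2)) • fderiv ℝ g t :=
    fun t => ((dphi1 (g t)).comp_hasFDerivAt t (hg t).hasFDerivAt).fderiv
  have hfd2 : ∀ t, fderiv ℝ (fun t => g t * Real.exp (g t / 2)) t
      = ((1 + g t / 2) * Real.exp (g t / 2)) • fderiv ℝ g t :=
    fun t => ((dphi2 (g t)).comp_hasFDerivAt t (hg t).hasFDerivAt).fderiv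
  have hsum1 : ∀ t, (∑ i : Fin m, (fderiv ℝ (fun t => Real.exp (g t / 2)) t (Pi.single i 1)) ^ 2)
      ≤ c^2/4 * Real.exp (g t) := by
    intro t
    have heq : (∑ i : Fin m, (fderiv ℝ (fun t => Real.exp (g t / 2)) t (Pi.single i 1)) ^ 2)
        = (Real.exp (g t / 2) * (1/2))^2 * ∑ i : Fin m, (fderiv ℝ g t (Pi.single i 1)) ^ 2 := by
      rw [hfd1 t, Finset.mul_sum]
      simp [mul_pow]
    rw [heq]
    calc (Real.exp (g t / 2) * (1/2))^2 * ∑ i : Fin m, (fderiv ℝ g t (Pi.single i 1)) ^ 2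
        ≤ (Real.exp (g t / 2) * (1/2))^2 * c^2 :=
          mul_le_mul_of_nonneg_left (hgrad t) (sq_nonneg _)
      _ = c^2/4 * Real.exp (g t) := by rw [mul_pow, exp_half_sq]; ring
  have hsum2 : ∀ t, (∑ i : Fin m, (fderiv ℝ (fun t => g t * Real.exp (g t / 2)) t (Pi.single i 1)) ^ 2)
      ≤ c^2 * ((1 + g t / 2)^2 * Real.exp (g t)) := by
    intro t
    have heq : (∑ i : Fin m, (fderiv ℝ (fun t => g t * Real.exp (g t / 2)) t (Pi.single i 1)) ^ 2)
        = ((1 + g t / 2) * Real.exp (g t / 2))^2 * ∑ i : Fin m, (fderiv ℝ g t (Pi.single i 1)) ^ 2 := by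
      rw [hfd2 t, Finset.mul_sum]
      simp [mul_pow]
    rw [heq]
    calc ((1 + g t / 2) * Real.exp (g t / 2))^2 * ∑ i : Fin m, (fderiv ℝ g t (Pi.single i 1)) ^ 2
        ≤ ((1 + g t / 2) * Real.exp (g t / 2))^2 * c^2 :=
          mul_le_mul_of_nonneg_left (hgrad t) (sq_nonneg _)
      _ = c^2 * ((1 + g t / 2)^2 * Real.exp (g t)) := by rw [mul_pow, exp_half_sq]; ring
  -- Poincaré applied to exp(g/2)
  have hstep1 : Eg - m0^2 ≤ γ/4 * Eg := by
    have h := hP (fun t => Real.exp (g t / 2)) (diff_phi1.comp hg) hhalfL2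
    simp only [hsq_half] at h
    have h2 : C * ∫ t, (∑ i : Fin m, (fderiv ℝ (fun t => Real.exp (g t / 2)) t (Pi.single i 1)) ^ 2) ∂μ
        ≤ C * ∫ t, c^2/4 * Real.exp (g t) ∂μ := by
      refine mul_le_mul_of_nonneg_left ?_ hC.le
      exact integral_mono_of_nonneg
        (Filter.Eventually.of_forall fun t => Finset.sum_nonneg fun i _ => sq_nonneg _)
        (hEg.const_mul _) (Filter.Eventually.of_forall hsum1)
    rw [integral_const_mul] at h2
    have h5 := h.trans h2
    rw [← hEgdef, ← hm0def] at h5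
    have h4 : C * (c^2/4 * Eg) = γ/4 * Eg := by rw [hγdef]; ring
    linarith
  have i_exp_c : Integrable (fun t => Real.exp (g t) + m0^2) μ := by
    simpa using hEg.add (integrable_const (m0^2))
  have hvar_eq : ∫ t, (Real.exp (g t / 2) - m0)^2 ∂μ = Eg - m0^2 := by
    have hptw : (fun t => (Real.exp (g t / 2) - m0)^2)
        = fun t => (Real.exp (g t) + m0^2) - (2*m0) * Real.exp (g t / 2) := by
      funext t
      rw [sub_sq, exp_half_sq]
      ring
    rw [hptw, integral_sub i_exp_c (i_half.const_mul _),
      integral_add hEg (integrable_const _), integral_const_mul, integral_const]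
    rw [← hEgdef, ← hm0def]
    simp [measure_univ]
    ring
  have hvar_nonneg : (0:ℝ) ≤ Eg - m0^2 := by
    rw [← hvar_eq]; exact integral_nonneg fun t => sq_nonneg _
  have hTeq : ∫ t, g t * (Real.exp (g t / 2) - m0) ∂μ = T := by
    have hptw : (fun t => g t * (Real.exp (g t / 2) - m0))
        = fun t => g t * Real.exp (g t / 2) - m0 * g t := by funext t; ring
    rw [hptw, integral_sub i_gehalf (hgint.const_mul m0), integral_const_mul, hmean,
      mul_zero, sub_zero, hTdef]
  have hsubL2 : MemLp (fun t => Real.exp (g t / 2) - m0) 2 μ := by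
    exact hhalfL2.sub (memLp_const m0)
  have hT2 : T^2 ≤ γ * (γ/4 * Eg) := by
    have hcs := cs_integral μ g (fun t => Real.exp (g t / 2) - m0) hgL2 hsubL2
    rw [hTeq, hvar_eq] at hcs
    calc T^2 ≤ (∫ t, g t ^ 2 ∂μ) * (Eg - m0^2) := hcs
      _ ≤ γ * (Eg - m0^2) := mul_le_mul_of_nonneg_right hg2 hvar_nonneg
      _ ≤ γ * (γ/4 * Eg) := mul_le_mul_of_nonneg_left hstep1 hγ0
  -- M1 bound
  have hM1sq : M1^2 ≤ K2 * Eg := by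
    have hcs := cs_integral μ (fun t => g t * Real.exp (g t / 2)) (fun t => Real.exp (g t / 2))
      hgehalfL2 hhalfL2
    have hptw : (fun t => (g t * Real.exp (g t / 2)) * Real.exp (g t / 2))
        = fun t => g t * Real.exp (g t) := by
      funext t
      rw [mul_assoc, ← Real.exp_add, add_halves]
    simp only [hgehalf_sq, hsq_half] at hcs
    rw [show (∫ t, g t * Real.exp (g t / 2) * Real.exp (g t / 2) ∂μ)
        = ∫ t, g t * Real.exp (g t) ∂μ by exact congrArg _ hptw] at hcs
    rw [hM1def, hK2def, hEgdef]
    exact hcs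
  -- Poincaré applied to g exp(g/2)
  have ibound2 : Integrable (fun t => c^2 * Real.exp (g t) + c^2 * (g t * Real.exp (g t))
      + c^2/4 * (g t ^ 2 * Real.exp (g t))) μ := by
    exact ((hEg.const_mul (c^2)).add (i_ge.const_mul (c^2))).add (hKi.const_mul (c^2/4))
  have hptw2 : (fun t => c^2 * ((1 + g t / 2)^2 * Real.exp (g t)))
      = fun t => c^2 * Real.exp (g t) + c^2 * (g t * Real.exp (g t))
          + c^2/4 * (g t ^ 2 * Real.exp (g t)) := by
    funext t; ring
  have hstep2 : K2 ≤ T^2 + γ * (Eg + M1 + K2/4) := by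
    have h := hP (fun t => g t * Real.exp (g t / 2)) ((diff_phi2).comp hg) hgehalfL2
    simp only [hgehalf_sq] at h
    have h2 : C * ∫ t, (∑ i : Fin m, (fderiv ℝ (fun t => g t * Real.exp (g t / 2)) t (Pi.single i 1)) ^ 2) ∂μ
        ≤ C * ∫ t, c^2 * ((1 + g t / 2)^2 * Real.exp (g t)) ∂μ := by
      refine mul_le_mul_of_nonneg_left ?_ hC.le
      refine integral_mono_of_nonneg
        (Filter.Eventually.of_forall fun t => Finset.sum_nonneg fun i _ => sq_nonneg _)
        ?_ (Filter.Eventually.of_forall hsum2)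
      rw [hptw2]; exact ibound2
    have h3 : ∫ t, c^2 * ((1 + g t / 2)^2 * Real.exp (g t)) ∂μ
        = c^2 * Eg + c^2 * M1 + c^2/4 * K2 := by
      have i12 : Integrable (fun t => c^2 * Real.exp (g t) + c^2 * (g t * Real.exp (g t))) μ := by
        exact (hEg.const_mul (c^2)).add (i_ge.const_mul (c^2))
      rw [hptw2, integral_add i12 (hKi.const_mul _),
        integral_add (hEg.const_mul _) (i_ge.const_mul _), integral_const_mul,
        integral_const_mul, integral_const_mul, ← hEgdef, ← hM1def, ← hK2def]
    have h4 : C * (c^2 * Eg + c^2 * M1 + c^2/4 * K2) = γ * (Eg + M1 + K2/4) := by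
      rw [hγdef]; ring
    rw [h3] at h2
    have h5 := h.trans h2
    rw [← hK2def, ← hTdef] at h5
    linarith
  -- assemble
  obtain ⟨x, hxdef⟩ : ∃ y : ℝ, y = Real.sqrt K2 := ⟨_, rfl⟩
  obtain ⟨e, hedef⟩ : ∃ y : ℝ, y = Real.sqrt Eg := ⟨_, rfl⟩
  have hxnn : 0 ≤ x := hxdef ▸ Real.sqrt_nonneg _
  have henn : 0 ≤ e := hedef ▸ Real.sqrt_nonneg _
  have hx2 : x ^ 2 = K2 := by rw [hxdef]; exact Real.sq_sqrt hK2nn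
  have he2 : e ^ 2 = Eg := by rw [hedef]; exact Real.sq_sqrt hEgnn
  have hM1le : M1 ≤ x * e := by
    have h1 : M1 ≤ |M1| := le_abs_self _
    have h2 : |M1| = Real.sqrt (M1^2) := (Real.sqrt_sq_eq_abs M1).symm
    have h3 : Real.sqrt (M1^2) ≤ Real.sqrt (K2 * Eg) := Real.sqrt_le_sqrt hM1sq
    rw [Real.sqrt_mul hK2nn, ← hxdef, ← hedef] at h3
    linarith
  have hstep2' : K2 ≤ T^2 + β^2*(Eg + M1 + K2/4) := by rw [← hγβ]; exact hstep2
  have hT2' : T^2 ≤ β^2 * (β^2/4 * Eg) := by rw [← hγβ]; exact hT2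
  have hM1β : β^2*M1 ≤ β^2*(x*e) := mul_le_mul_of_nonneg_left hM1le (sq_nonneg β)
  have h1q : (4-β^2) * x ^ 2 ≤ (β^4 + 4*β^2) * e ^ 2 + 4*β^2*(x*e) := by
    rw [hx2, he2]
    linarith [hstep2', hT2', hM1β]
  have hquad := quad β x e hβ0 hβ2 hxnn henn h1q
  have h2β : (0:ℝ) < 2 - β := by linarith
  have hsq := pow_le_pow_left₀ (mul_nonneg h2β.le hxnn) hquad 2
  rw [mul_pow, mul_pow, hx2, he2] at hsq
  have hkey : K2 * (2-β)^2 ≤ β^2 * (2+β)^2 * Eg := by linarith [hsq]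
  have h2βne : (2 - β) ≠ 0 := ne_of_gt h2β
  have heq2 : γ * ((2 + β)/(2 - β))^2 * Eg = (β^2 * (2+β)^2 * Eg)/(2-β)^2 := by
    rw [hγβ, div_pow]
    field_simp
  rw [heq2, le_div_iff₀ (by positivity)]
  linarith


noncomputable def psi (c x : ℝ) : ℝ := x / Real.sqrt (1 + c * x ^ 2)

lemma psi_hasDeriv (c : ℝ) (hc : 0 < c) (x : ℝ) :
    ∃ d : ℝ, HasDerivAt (psi c) d x ∧ d ^ 2 ≤ 1 := by
  have hD : (0:ℝ) < 1 + c * x ^ 2 := by positivity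
  have hD1 : (1:ℝ) ≤ 1 + c * x ^ 2 := by nlinarith [sq_nonneg x]
  have hs0 : 0 < Real.sqrt (1 + c * x ^ 2) := Real.sqrt_pos.2 hD
  have hs1 : (1:ℝ) ≤ Real.sqrt (1 + c * x ^ 2) := by
    have := Real.sqrt_le_sqrt hD1
    rwa [Real.sqrt_one] at this
  have hs2 : Real.sqrt (1 + c * x ^ 2) ^ 2 = 1 + c * x ^ 2 := Real.sq_sqrt hD.le
  have hDd : HasDerivAt (fun x : ℝ => 1 + c * x ^ 2) (c * (2 * x)) x := by
    have h := ((hasDerivAt_pow 2 x).const_mul c).const_add (1:ℝ)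
    refine h.congr_deriv ?_
    simp [pow_one]
  have hsq : HasDerivAt (fun x : ℝ => Real.sqrt (1 + c * x ^ 2))
      (1 / (2 * Real.sqrt (1 + c * x ^ 2)) * (c * (2 * x))) x :=
    (Real.hasDerivAt_sqrt hD.ne').comp x hDd
  have hdiv := (hasDerivAt_id x).div hsq hs0.ne'
  simp only [id_eq, one_mul] at hdiv
  refine ⟨_, hdiv, ?_⟩
  set s := Real.sqrt (1 + c * x ^ 2) with hsdef
  have hnum : s - x * (1 / (2 * s) * (c * (2 * x))) = 1 / s := by
    rw [eq_div_iff hs0.ne', sub_mul]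
    have hxx : x * (1 / (2 * s) * (c * (2 * x))) * s = c * x ^ 2 := by
      field_simp
    rw [hxx]
    nlinarith [hs2]
  rw [hnum, div_div]
  rw [div_pow, one_pow, div_le_one (by positivity)]
  have h3 : (1:ℝ) ≤ s * s^2 := by nlinarith [hs1, hs0]
  nlinarith [h3]

lemma psi_abs_le (c : ℝ) (hc : 0 < c) (x : ℝ) : |psi c x| ≤ |x| := by
  have hD : (0:ℝ) < 1 + c * x ^ 2 := by positivity
  have hD1 : (1:ℝ) ≤ 1 + c * x ^ 2 := by nlinarith [sq_nonneg x]
  have hs1 : (1:ℝ) ≤ Real.sqrt (1 + c * x ^ 2) := by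
    have := Real.sqrt_le_sqrt hD1
    rwa [Real.sqrt_one] at this
  rw [psi, abs_div, abs_of_nonneg (Real.sqrt_nonneg _)]
  exact div_le_self (abs_nonneg _) hs1

lemma psi_bound (c : ℝ) (hc : 0 < c) (x : ℝ) : |psi c x| ≤ Real.sqrt (1/c) := by
  have hD : (0:ℝ) < 1 + c * x ^ 2 := by positivity
  have hs2 : Real.sqrt (1 + c * x ^ 2) ^ 2 = 1 + c * x ^ 2 := Real.sq_sqrt hD.le
  apply Real.abs_le_sqrt
  rw [psi, div_pow, hs2, div_le_div_iff₀ hD (by positivity)]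
  nlinarith [sq_nonneg x]

lemma psi_tendsto (x : ℝ) :
    Tendsto (fun n : ℕ => psi (1/((n:ℝ)+1)) x) atTop (𝓝 x) := by
  have h0 : Tendsto (fun n : ℕ => 1/((n:ℝ)+1)) atTop (𝓝 0) :=
    tendsto_one_div_add_atTop_nhds_zero_nat
  have h1 : Tendsto (fun n : ℕ => 1 + (1/((n:ℝ)+1)) * x ^ 2) atTop (𝓝 1) := by
    have := (h0.mul_const (x^2)).const_add (1:ℝ)
    simpa using this
  have h2 : Tendsto (fun n : ℕ => Real.sqrt (1 + (1/((n:ℝ)+1)) * x ^ 2)) atTop (𝓝 1) := by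
    have := (Real.continuous_sqrt.tendsto 1).comp h1
    rw [Real.sqrt_one] at this
    exact this
  have h3 := (tendsto_const_nhds (x := x) (f := atTop (α := ℕ))).div h2 one_ne_zero
  rw [div_one] at h3
  exact h3

lemma psi_continuous (c : ℝ) (hc : 0 < c) : Continuous (psi c) := by
  apply Continuous.div continuous_id
  · exact Real.continuous_sqrt.comp (by continuity)
  · intro x
    have hD : (0:ℝ) < 1 + c * x ^ 2 := by positivity
    exact (Real.sqrt_pos.2 hD).ne'

lemma psi_differentiable (c : ℝ) (hc : 0 < c) : Differentiable ℝ (psi c) :=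
  fun x => ((psi_hasDeriv c hc x).choose_spec.1).differentiableAt

set_option maxHeartbeats 1000000 in
lemma L2bound {m : ℕ} (μ : Measure (Fin m → ℝ)) [IsProbabilityMeasure μ]
    (C : ℝ) (hC : 0 < C)
    (hP : ∀ h : (Fin m → ℝ) → ℝ, Differentiable ℝ h → MemLp h 2 μ →
      (∫ t, (h t) ^ 2 ∂μ) - (∫ t, h t ∂μ) ^ 2
        ≤ C * ∫ t, (∑ i : Fin m, (fderiv ℝ h t (Pi.single i 1)) ^ 2) ∂μ)
    (f : (Fin m → ℝ) → ℝ) (hf : Differentiable ℝ f)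
    (hmean : (∫ t, f t ∂μ) = 0)
    (a : ℝ) (ha0 : 0 < a)
    (hgrad : ∀ t, (∑ i : Fin m, (fderiv ℝ f t (Pi.single i 1)) ^ 2) ≤ a ^ 2)
    (hint0 : Integrable f μ) :
    Integrable (fun t => f t ^ 2) μ ∧ ∫ t, f t ^ 2 ∂μ ≤ C * a ^ 2 := by
  have hcn : ∀ n : ℕ, (0:ℝ) < 1/((n:ℝ)+1) := fun n => by positivity
  set F : ℕ → (Fin m → ℝ) → ℝ := fun n t => psi (1/((n:ℝ)+1)) (f t) with hFdef
  have hFdiff : ∀ n, Differentiable ℝ (F n) :=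
    fun n => (psi_differentiable _ (hcn n)).comp hf
  have hFasm : ∀ n, AEStronglyMeasurable (F n) μ :=
    fun n => ((psi_continuous _ (hcn n)).comp hf.continuous).aestronglyMeasurable
  have hFL2 : ∀ n, MemLp (F n) 2 μ := by
    intro n
    refine MemLp.of_bound (hFasm n) (Real.sqrt (1/(1/((n:ℝ)+1)))) ?_
    filter_upwards with t
    rw [Real.norm_eq_abs]
    exact psi_bound _ (hcn n) (f t)
  have hFsum : ∀ n t, (∑ i : Fin m, (fderiv ℝ (F n) t (Pi.single i 1)) ^ 2) ≤ a ^ 2 := by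
    intro n t
    obtain ⟨d, hd, hd2⟩ := psi_hasDeriv _ (hcn n) (f t)
    have heq : fderiv ℝ (F n) t = d • fderiv ℝ f t :=
      (hd.comp_hasFDerivAt t (hf t).hasFDerivAt).fderiv
    have hsum : (∑ i : Fin m, (fderiv ℝ (F n) t (Pi.single i 1)) ^ 2)
        = d^2 * ∑ i : Fin m, (fderiv ℝ f t (Pi.single i 1)) ^ 2 := by
      rw [heq, Finset.mul_sum]
      simp [mul_pow]
    rw [hsum]
    have h1 := mul_le_mul hd2 (hgrad t)
      (Finset.sum_nonneg fun i _ => sq_nonneg _) zero_le_one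
    linarith
  have hvar : ∀ n, ∫ t, (F n t) ^ 2 ∂μ ≤ C * a^2 + (∫ t, F n t ∂μ)^2 := by
    intro n
    have h := hP (F n) (hFdiff n) (hFL2 n)
    have h2 : ∫ t, (∑ i : Fin m, (fderiv ℝ (F n) t (Pi.single i 1)) ^ 2) ∂μ
        ≤ ∫ (_ : Fin m → ℝ), a^2 ∂μ := by
      exact integral_mono_of_nonneg
        (Filter.Eventually.of_forall fun t => Finset.sum_nonneg fun i _ => sq_nonneg _)
        (integrable_const _) (Filter.Eventually.of_forall (hFsum n))
    rw [integral_const] at h2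
    simp only [probReal_univ, measure_univ, ENNReal.toReal_one, smul_eq_mul, one_mul] at h2
    nlinarith [mul_le_mul_of_nonneg_left h2 hC.le]
  have hmeantend : Tendsto (fun n => ∫ t, F n t ∂μ) atTop (𝓝 0) := by
    rw [← hmean]
    refine tendsto_integral_of_dominated_convergence (fun t => |f t|) hFasm hint0.abs ?_ ?_
    · intro n
      filter_upwards with t
      rw [Real.norm_eq_abs]
      exact psi_abs_le _ (hcn n) (f t)
    · filter_upwards with t
      exact psi_tendsto (f t)
  have hFint2 : ∀ n, Integrable (fun t => (F n t)^2) μ := fun n => (hFL2 n).integrable_sq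
  have hofReal : ∀ n, ENNReal.ofReal (∫ t, (F n t)^2 ∂μ)
      = ∫⁻ t, ENNReal.ofReal ((F n t)^2) ∂μ :=
    fun n => ofReal_integral_eq_lintegral_ofReal (hFint2 n)
      (Filter.Eventually.of_forall fun t => sq_nonneg _)
  have hptconv : ∀ t, Tendsto (fun n => ENNReal.ofReal ((F n t)^2)) atTop
      (𝓝 (ENNReal.ofReal ((f t)^2))) := by
    intro t
    exact (ENNReal.continuous_ofReal.tendsto _).comp
      (((psi_tendsto (f t)).pow 2).congr (fun n => rfl))
  have hfatou : ∫⁻ t, ENNReal.ofReal ((f t)^2) ∂μ ≤ ENNReal.ofReal (C * a^2) := by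
    have h1 : ∫⁻ t, ENNReal.ofReal ((f t)^2) ∂μ
        = ∫⁻ t, Filter.liminf (fun n => ENNReal.ofReal ((F n t)^2)) atTop ∂μ :=
      lintegral_congr fun t => ((hptconv t).liminf_eq).symm
    have h2 : ∫⁻ t, Filter.liminf (fun n => ENNReal.ofReal ((F n t)^2)) atTop ∂μ
        ≤ Filter.liminf (fun n => ∫⁻ t, ENNReal.ofReal ((F n t)^2) ∂μ) atTop := by
      refine lintegral_liminf_le fun n => ?_
      exact (((psi_continuous _ (hcn n)).comp hf.continuous).pow 2).measurable.ennreal_ofReal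
    have h3 : Filter.liminf (fun n => ∫⁻ t, ENNReal.ofReal ((F n t)^2) ∂μ) atTop
        ≤ Filter.liminf (fun n => ENNReal.ofReal (C * a^2 + (∫ t, F n t ∂μ)^2)) atTop := by
      refine Filter.liminf_le_liminf (Filter.Eventually.of_forall fun n => ?_)
      rw [← hofReal n]
      exact ENNReal.ofReal_le_ofReal (hvar n)
    have h4 : Tendsto (fun n => ENNReal.ofReal (C * a^2 + (∫ t, F n t ∂μ)^2)) atTop
        (𝓝 (ENNReal.ofReal (C * a^2))) := by
      have hr : Tendsto (fun n => C * a^2 + (∫ t, F n t ∂μ)^2) atTop (𝓝 (C * a^2)) := by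
        have := (hmeantend.pow 2).const_add (C * a^2)
        simpa using this
      exact (ENNReal.continuous_ofReal.tendsto _).comp hr
    calc ∫⁻ t, ENNReal.ofReal ((f t)^2) ∂μ
        ≤ Filter.liminf (fun n => ∫⁻ t, ENNReal.ofReal ((F n t)^2) ∂μ) atTop := h1 ▸ h2
      _ ≤ Filter.liminf (fun n => ENNReal.ofReal (C * a^2 + (∫ t, F n t ∂μ)^2)) atTop := h3
      _ = ENNReal.ofReal (C * a^2) := h4.liminf_eq
  have hsqasm : AEStronglyMeasurable (fun t => f t ^ 2) μ :=
    (hf.continuous.pow 2).aestronglyMeasurable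
  have hint : Integrable (fun t => f t ^ 2) μ := by
    refine ⟨hsqasm, ?_⟩
    rw [hasFiniteIntegral_iff_ofReal (Filter.Eventually.of_forall fun t => sq_nonneg _)]
    exact lt_of_le_of_lt hfatou ENNReal.ofReal_lt_top
  refine ⟨hint, ?_⟩
  rw [integral_eq_lintegral_of_nonneg_ae (Filter.Eventually.of_forall fun t => sq_nonneg _) hsqasm]
  exact ENNReal.toReal_le_of_le_ofReal (by positivity) hfatou


lemma ftc_id (x : ℝ) :
    ∫ s in Set.Ioc (0:ℝ) 1, s * x^2 * Real.exp (s*x)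
      = x * Real.exp x - Real.exp x + 1 := by
  have hderiv : ∀ s ∈ Set.uIcc (0:ℝ) 1,
      HasDerivAt (fun s => Real.exp (s*x) * (s*x-1)) (s * x^2 * Real.exp (s*x)) s := by
    intro s _
    have h1 : HasDerivAt (fun s : ℝ => s * x) x s := hasDerivAt_mul_const x
    have h2 : HasDerivAt (fun s : ℝ => Real.exp (s*x)) (Real.exp (s*x) * x) s :=
      h1.exp
    have h3 : HasDerivAt (fun s : ℝ => s*x - 1) x s := h1.sub_const 1
    have h4 := h2.mul h3
    refine h4.congr_deriv ?_
    ring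
  have hcont : Continuous (fun s : ℝ => s * x^2 * Real.exp (s*x)) := by continuity
  have h := intervalIntegral.integral_eq_sub_of_hasDerivAt hderiv
    (hcont.intervalIntegrable 0 1)
  rw [intervalIntegral.integral_of_le zero_le_one] at h
  rw [h]
  simp [Real.exp_zero]
  ring

lemma exp_convex_bound (s x : ℝ) (hs0 : 0 ≤ s) (hs1 : s ≤ 1) :
    Real.exp (s * x) ≤ (1 - s) + s * Real.exp x := by
  have h := convexOn_exp.2 (Set.mem_univ (0:ℝ)) (Set.mem_univ x)
    (by linarith : (0:ℝ) ≤ 1 - s) hs0 (by ring)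
  simpa using h

lemma sq_exp_bound (s x : ℝ) (hs1 : s < 1) (hx : 0 ≤ x) :
    x^2 * Real.exp (s*x) ≤ (2/(1-s))^2 * Real.exp x := by
  have h1s : 0 < 1 - s := by linarith
  have hv : 0 ≤ (1-s)*x := by positivity
  have h1 : 1 + (1-s)*x/2 ≤ Real.exp ((1-s)*x/2) := by
    have := Real.add_one_le_exp ((1-s)*x/2); linarith
  have h2 : ((1-s)*x/2)^2 ≤ Real.exp ((1-s)*x/2)^2 := by
    apply pow_le_pow_left₀ (by positivity) (le_trans (by linarith) h1)
  have h3 : Real.exp ((1-s)*x/2)^2 = Real.exp ((1-s)*x) := by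
    rw [sq, ← Real.exp_add]
    ring_nf
  have h4 : ((1-s)*x)^2/4 ≤ Real.exp ((1-s)*x) := by
    rw [← h3]
    calc ((1-s)*x)^2/4 = ((1-s)*x/2)^2 := by ring
      _ ≤ _ := h2
  have h5 : Real.exp (s*x) * Real.exp ((1-s)*x) = Real.exp x := by
    rw [← Real.exp_add]; ring_nf
  have hexp := (Real.exp_pos (s*x)).le
  calc x^2 * Real.exp (s*x)
      ≤ ((2/(1-s))^2 * Real.exp ((1-s)*x)) * Real.exp (s*x) := by
        have : x^2 ≤ (2/(1-s))^2 * Real.exp ((1-s)*x) := by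
          rw [div_pow, div_mul_eq_mul_div, le_div_iff₀ (by positivity)]
          nlinarith [h4]
        nlinarith [this, hexp, Real.exp_pos ((1-s)*x)]
    _ = (2/(1-s))^2 * Real.exp x := by rw [mul_assoc, mul_comm (Real.exp ((1-s)*x)), h5]


set_option maxHeartbeats 2000000 in
/-- Modified log-Sobolev inequality from a Poincaré inequality: if `μ` satisfies
`Var_μ(h) ≤ C ∫ ‖∇h‖² dμ`, `∫ f dμ = 0` and `‖∇f‖ ≤ a < 2/√C`, then
`Ent_μ(e^f) ≤ (a²C/2)((2+a√C)/(2-a√C))² ∫ e^f dμ`. -/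
theorem stmt_18 {m : ℕ} (μ : Measure (Fin m → ℝ)) (hprob : IsProbabilityMeasure μ)
    (C : ℝ) (hC : 0 < C)
    (hP : ∀ h : (Fin m → ℝ) → ℝ, Differentiable ℝ h → MemLp h 2 μ →
      (∫ t, (h t) ^ 2 ∂μ) - (∫ t, h t ∂μ) ^ 2
        ≤ C * ∫ t, (∑ i : Fin m, (fderiv ℝ h t (Pi.single i 1)) ^ 2) ∂μ)
    (f : (Fin m → ℝ) → ℝ) (hf : Differentiable ℝ f)
    (hmean : (∫ t, f t ∂μ) = 0)
    (a : ℝ) (ha0 : 0 < a) (ha : a < 2 / Real.sqrt C)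
    (hgrad : ∀ t, (∑ i : Fin m, (fderiv ℝ f t (Pi.single i 1)) ^ 2) ≤ a ^ 2)
    (hint0 : Integrable f μ)
    (hint1 : Integrable (fun t => Real.exp (f t)) μ)
    (hint2 : Integrable (fun t => f t * Real.exp (f t)) μ) :
    (∫ t, f t * Real.exp (f t) ∂μ)
        - (∫ t, Real.exp (f t) ∂μ) * Real.log (∫ t, Real.exp (f t) ∂μ)
      ≤ (a ^ 2 * C / 2) * ((2 + a * Real.sqrt C) / (2 - a * Real.sqrt C)) ^ 2 *
          ∫ t, Real.exp (f t) ∂μ := by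
  have hbpos : 0 < Real.sqrt C := Real.sqrt_pos.2 hC
  have hβ0 : 0 < a * Real.sqrt C := mul_pos ha0 hbpos
  have hβ2 : a * Real.sqrt C < 2 := by
    rw [lt_div_iff₀ hbpos] at ha; linarith
  obtain ⟨hf2int, hf2le⟩ := L2bound μ C hC hP f hf hmean a ha0 hgrad hint0
  have hfL2 : MemLp f 2 μ :=
    (memLp_two_iff_integrable_sq hf.continuous.aestronglyMeasurable).2 hf2int
  obtain ⟨E, hEdef⟩ : ∃ x : ℝ, x = ∫ t, Real.exp (f t) ∂μ := ⟨_, rfl⟩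
  obtain ⟨ρ2, hρ2def⟩ : ∃ x : ℝ, x = ((2 + a * Real.sqrt C) / (2 - a * Real.sqrt C)) ^ 2 :=
    ⟨_, rfl⟩
  rw [← hEdef, ← hρ2def]
  have hρ2nn : 0 ≤ ρ2 := hρ2def ▸ sq_nonneg _
  have hE1 : 1 ≤ E := by
    rw [hEdef]
    have h1 : (1:ℝ) = ∫ t, (1 + f t) ∂μ := by
      rw [integral_add (integrable_const 1) hint0, hmean]; simp
    rw [h1]
    have hadd : Integrable (fun t => 1 + f t) μ := by
      simpa using (integrable_const (1:ℝ)).add hint0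
    exact integral_mono hadd hint1 (fun t => by
      have := Real.add_one_le_exp (f t); linarith)
  have hEpos : (0:ℝ) < E := lt_of_lt_of_le zero_lt_one hE1
  -- the key bound for each s
  have KEY : ∀ s : ℝ, 0 < s → s ≤ 1 →
      Integrable (fun t => f t ^ 2 * Real.exp (s * f t)) μ →
      ∫ t, f t ^ 2 * Real.exp (s * f t) ∂μ ≤ C * a ^ 2 * ρ2 * E := by
    intro s hs0 hs1 hKi
    have hg : Differentiable ℝ (fun t => s * f t) := hf.const_mul s
    have hgm : ∫ t, s * f t ∂μ = 0 := by rw [integral_const_mul, hmean, mul_zero]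
    have hca : 0 < s * a := mul_pos hs0 ha0
    have hβsle : s * a * Real.sqrt C ≤ a * Real.sqrt C := by nlinarith
    have hβs : s * a * Real.sqrt C < 2 := lt_of_le_of_lt hβsle hβ2
    have hgrads : ∀ t, (∑ i : Fin m, (fderiv ℝ (fun t => s * f t) t (Pi.single i 1)) ^ 2)
        ≤ (s * a) ^ 2 := by
      intro t
      have hfd : fderiv ℝ (fun t => s * f t) t = s • fderiv ℝ f t :=
        fderiv_const_mul (hf t) s
      have hsum : (∑ i : Fin m, (fderiv ℝ (fun t => s * f t) t (Pi.single i 1)) ^ 2)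
          = s ^ 2 * ∑ i : Fin m, (fderiv ℝ f t (Pi.single i 1)) ^ 2 := by
        rw [hfd, Finset.mul_sum]
        simp [mul_pow]
      rw [hsum, mul_pow]
      exact mul_le_mul_of_nonneg_left (hgrad t) (sq_nonneg s)
    have hL2s : MemLp (fun t => s * f t) 2 μ := hfL2.const_mul s
    have hg2s : ∫ t, (s * f t) ^ 2 ∂μ ≤ C * (s * a) ^ 2 := by
      have h1 : (fun t => (s * f t) ^ 2) = fun t => s ^ 2 * f t ^ 2 := by
        funext t; ring
      rw [h1, integral_const_mul]
      calc s ^ 2 * ∫ t, f t ^ 2 ∂μ ≤ s ^ 2 * (C * a ^ 2) :=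
            mul_le_mul_of_nonneg_left hf2le (sq_nonneg s)
        _ = C * (s * a) ^ 2 := by ring
    have hEgs : Integrable (fun t => Real.exp (s * f t)) μ := by
      have hbnd1 : Integrable (fun t => (1:ℝ) + Real.exp (f t)) μ := by
        simpa using (integrable_const (1:ℝ)).add hint1
      refine Integrable.mono' hbnd1
        ((Real.continuous_exp.comp (continuous_const.mul hf.continuous)).aestronglyMeasurable) ?_
      filter_upwards with t
      rw [Real.norm_eq_abs, abs_of_nonneg (Real.exp_pos _).le]
      have h1 := exp_convex_bound s (f t) hs0.le hs1
      have h2 := (Real.exp_pos (f t)).le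
      nlinarith
    have hKis : Integrable (fun t => (s * f t) ^ 2 * Real.exp (s * f t)) μ := by
      have h1 : (fun t => (s * f t) ^ 2 * Real.exp (s * f t))
          = fun t => s ^ 2 * (f t ^ 2 * Real.exp (s * f t)) := by funext t; ring
      rw [h1]; exact hKi.const_mul _
    have hBL := BL μ C hC hP (fun t => s * f t) hg hgm (s * a) hca hβs hgrads hL2s hg2s
      hEgs hKis
    have hLHS : ∫ t, (s * f t) ^ 2 * Real.exp (s * f t) ∂μ
        = s ^ 2 * ∫ t, f t ^ 2 * Real.exp (s * f t) ∂μ := by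
      rw [show (fun t => (s * f t) ^ 2 * Real.exp (s * f t))
        = fun t => s ^ 2 * (f t ^ 2 * Real.exp (s * f t)) from funext fun t => by ring,
        integral_const_mul]
    rw [hLHS] at hBL
    have hEsle : ∫ t, Real.exp (s * f t) ∂μ ≤ E := by
      have hadd : Integrable (fun t => (1 - s) + s * Real.exp (f t)) μ := by
        simpa using (integrable_const (1 - s)).add (hint1.const_mul s)
      have h1 : ∫ t, Real.exp (s * f t) ∂μ ≤ ∫ t, ((1 - s) + s * Real.exp (f t)) ∂μ :=
        integral_mono hEgs hadd (fun t => exp_convex_bound s (f t) hs0.le hs1)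
      rw [integral_add (integrable_const _) (hint1.const_mul s), integral_const,
        integral_const_mul, ← hEdef] at h1
      simp only [probReal_univ, measure_univ, ENNReal.toReal_one, smul_eq_mul, one_mul] at h1
      nlinarith
    have hEsnn : 0 ≤ ∫ t, Real.exp (s * f t) ∂μ :=
      integral_nonneg fun t => (Real.exp_pos _).le
    have hρ : ((2 + s * a * Real.sqrt C) / (2 - s * a * Real.sqrt C)) ^ 2 ≤ ρ2 := by
      rw [hρ2def]
      have hd1 : (0:ℝ) < 2 - a * Real.sqrt C := by linarith
      have hd2 : (0:ℝ) < 2 - s * a * Real.sqrt C := by linarith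
      have hnum : (0:ℝ) ≤ (2 + s * a * Real.sqrt C) / (2 - s * a * Real.sqrt C) := by
        apply div_nonneg _ hd2.le
        nlinarith
      refine pow_le_pow_left₀ hnum ?_ 2
      rw [div_le_div_iff₀ hd2 hd1]
      nlinarith
    have hchain : C * (s * a) ^ 2 * ((2 + s * a * Real.sqrt C) / (2 - s * a * Real.sqrt C)) ^ 2
          * ∫ t, Real.exp (s * f t) ∂μ ≤ s ^ 2 * (C * a ^ 2 * ρ2 * E) := by
      have hc1 : (0:ℝ) ≤ C * (s * a) ^ 2 := by positivity
      have step1 : C * (s * a) ^ 2 * ((2 + s * a * Real.sqrt C) / (2 - s * a * Real.sqrt C)) ^ 2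
            * ∫ t, Real.exp (s * f t) ∂μ
          ≤ C * (s * a) ^ 2 * ρ2 * ∫ t, Real.exp (s * f t) ∂μ := by
        apply mul_le_mul_of_nonneg_right _ hEsnn
        exact mul_le_mul_of_nonneg_left hρ hc1
      have step2 : C * (s * a) ^ 2 * ρ2 * ∫ t, Real.exp (s * f t) ∂μ
          ≤ C * (s * a) ^ 2 * ρ2 * E := by
        apply mul_le_mul_of_nonneg_left hEsle
        positivity
      have heq : C * (s * a) ^ 2 * ρ2 * E = s ^ 2 * (C * a ^ 2 * ρ2 * E) := by ring
      linarith
    have hfinal := hBL.trans hchain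
    have hs2 : (0:ℝ) < s ^ 2 := by positivity
    exact le_of_mul_le_mul_left hfinal hs2
  -- integrability of f^2 e^{sf} for s < 1
  have hint_s : ∀ s : ℝ, 0 ≤ s → s < 1 →
      Integrable (fun t => f t ^ 2 * Real.exp (s * f t)) μ := by
    intro s hs0 hs1
    have hbnd : Integrable (fun t => f t ^ 2 + (2/(1-s))^2 * Real.exp (f t)) μ := by
      exact hf2int.add (hint1.const_mul ((2/(1-s))^2))
    refine Integrable.mono' hbnd
      (((hf.continuous.pow 2).mul
        (Real.continuous_exp.comp (continuous_const.mul hf.continuous))).aestronglyMeasurable) ?_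
    filter_upwards with t
    rw [Real.norm_eq_abs, abs_of_nonneg (by positivity)]
    rcases le_or_gt (f t) 0 with h | h
    · have h1 : Real.exp (s * f t) ≤ 1 := by
        rw [← Real.exp_zero]
        exact Real.exp_le_exp.2 (mul_nonpos_of_nonneg_of_nonpos hs0 h)
      have h2 : (0:ℝ) ≤ (2/(1-s))^2 * Real.exp (f t) := by positivity
      nlinarith [sq_nonneg (f t)]
    · have h1 := sq_exp_bound s (f t) hs1 h.le
      nlinarith [sq_nonneg (f t)]
  -- Fatou to get integrability of f^2 e^f
  have M0nn : (0:ℝ) ≤ C * a ^ 2 * ρ2 * E := by positivity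
  have hKi1 : Integrable (fun t => f t ^ 2 * Real.exp (f t)) μ ∧
      ∫ t, f t ^ 2 * Real.exp (f t) ∂μ ≤ C * a ^ 2 * ρ2 * E := by
    set sn : ℕ → ℝ := fun n => 1 - 1/((n:ℝ)+2) with hsndef
    have hsnlt : ∀ n, sn n < 1 := by
      intro n
      have h : (0:ℝ) < 1/((n:ℝ)+2) := by positivity
      simp only [hsndef]
      linarith
    have hsnpos : ∀ n, 0 < sn n := by
      intro n
      have h2 : (2:ℝ) ≤ (n:ℝ)+2 := by
        have := Nat.cast_nonneg (α := ℝ) n; linarith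
      have h3 : 1/((n:ℝ)+2) ≤ 1/2 := one_div_le_one_div_of_le two_pos h2
      simp only [hsndef]
      linarith
    have hsnt : Tendsto sn atTop (𝓝 1) := by
      have h1 : Tendsto (fun n : ℕ => ((n:ℝ)+2)) atTop atTop :=
        Filter.tendsto_atTop_add_const_right atTop 2 tendsto_natCast_atTop_atTop
      have h2 : Tendsto (fun n : ℕ => 1/((n:ℝ)+2)) atTop (𝓝 0) := by
        exact h1.inv_tendsto_atTop.congr fun n => by simp [one_div]
      have h3 := (tendsto_const_nhds (x := (1:ℝ)) (f := atTop (α := ℕ))).sub h2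
      rw [hsndef]
      simpa using h3
    have hFn : ∀ n, Integrable (fun t => f t ^ 2 * Real.exp (sn n * f t)) μ :=
      fun n => hint_s (sn n) (hsnpos n).le (hsnlt n)
    have hFnle : ∀ n, ∫ t, f t ^ 2 * Real.exp (sn n * f t) ∂μ ≤ C * a ^ 2 * ρ2 * E :=
      fun n => KEY (sn n) (hsnpos n) (hsnlt n).le (hFn n)
    have hpt : ∀ t, Tendsto (fun n => ENNReal.ofReal (f t ^ 2 * Real.exp (sn n * f t))) atTop
        (𝓝 (ENNReal.ofReal (f t ^ 2 * Real.exp (f t)))) := by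
      intro t
      apply (ENNReal.continuous_ofReal.tendsto _).comp
      have h1 : Tendsto (fun n => sn n * f t) atTop (𝓝 (f t)) := by
        have := hsnt.mul_const (f t)
        rwa [one_mul] at this
      have h2 : Tendsto (fun n => Real.exp (sn n * f t)) atTop (𝓝 (Real.exp (f t))) :=
        (Real.continuous_exp.tendsto _).comp h1
      simpa using h2.const_mul (f t ^ 2)
    have hfatou : ∫⁻ t, ENNReal.ofReal (f t ^ 2 * Real.exp (f t)) ∂μ
        ≤ ENNReal.ofReal (C * a ^ 2 * ρ2 * E) := by
      have h1 : ∫⁻ t, ENNReal.ofReal (f t ^ 2 * Real.exp (f t)) ∂μ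
          = ∫⁻ t, Filter.liminf (fun n => ENNReal.ofReal (f t ^ 2 * Real.exp (sn n * f t))) atTop ∂μ :=
        lintegral_congr fun t => ((hpt t).liminf_eq).symm
      have h2 : ∫⁻ t, Filter.liminf (fun n => ENNReal.ofReal (f t ^ 2 * Real.exp (sn n * f t))) atTop ∂μ
          ≤ Filter.liminf (fun n => ∫⁻ t, ENNReal.ofReal (f t ^ 2 * Real.exp (sn n * f t)) ∂μ) atTop := by
        refine lintegral_liminf_le fun n => ?_
        exact (((hf.continuous.pow 2).mul
          (Real.continuous_exp.comp (continuous_const.mul hf.continuous))).measurable).ennreal_ofReal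
      have h3 : ∀ n, ∫⁻ t, ENNReal.ofReal (f t ^ 2 * Real.exp (sn n * f t)) ∂μ
          ≤ ENNReal.ofReal (C * a ^ 2 * ρ2 * E) := by
        intro n
        rw [← ofReal_integral_eq_lintegral_ofReal (hFn n)
          (Filter.Eventually.of_forall fun t => by positivity)]
        exact ENNReal.ofReal_le_ofReal (hFnle n)
      have h4 : Filter.liminf (fun n => ∫⁻ t, ENNReal.ofReal (f t ^ 2 * Real.exp (sn n * f t)) ∂μ) atTop
          ≤ ENNReal.ofReal (C * a ^ 2 * ρ2 * E) := by
        calc _ ≤ Filter.liminf (fun _ : ℕ => ENNReal.ofReal (C * a ^ 2 * ρ2 * E)) atTop :=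
              Filter.liminf_le_liminf (Filter.Eventually.of_forall h3)
          _ = ENNReal.ofReal (C * a ^ 2 * ρ2 * E) := Filter.liminf_const _
      calc ∫⁻ t, ENNReal.ofReal (f t ^ 2 * Real.exp (f t)) ∂μ
          ≤ Filter.liminf (fun n => ∫⁻ t, ENNReal.ofReal (f t ^ 2 * Real.exp (sn n * f t)) ∂μ) atTop :=
            h1 ▸ h2
        _ ≤ ENNReal.ofReal (C * a ^ 2 * ρ2 * E) := h4
    have hasm : AEStronglyMeasurable (fun t => f t ^ 2 * Real.exp (f t)) μ :=
      ((hf.continuous.pow 2).mul (Real.continuous_exp.comp hf.continuous)).aestronglyMeasurable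
    have hint : Integrable (fun t => f t ^ 2 * Real.exp (f t)) μ := by
      refine ⟨hasm, ?_⟩
      rw [hasFiniteIntegral_iff_ofReal (Filter.Eventually.of_forall fun t => by positivity)]
      exact lt_of_le_of_lt hfatou ENNReal.ofReal_lt_top
    refine ⟨hint, ?_⟩
    rw [integral_eq_lintegral_of_nonneg_ae (Filter.Eventually.of_forall fun t => by positivity) hasm]
    exact ENNReal.toReal_le_of_le_ofReal M0nn hfatou
  -- integrability on Ioc for each s in (0,1]
  have hIs : ∀ s ∈ Set.Ioc (0:ℝ) 1, Integrable (fun t => f t ^ 2 * Real.exp (s * f t)) μ := by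
    intro s hs
    rcases lt_or_eq_of_le hs.2 with h | h
    · exact hint_s s hs.1.le h
    · subst h
      simpa using hKi1.1
  have hIsle : ∀ s ∈ Set.Ioc (0:ℝ) 1,
      ∫ t, f t ^ 2 * Real.exp (s * f t) ∂μ ≤ C * a ^ 2 * ρ2 * E :=
    fun s hs => KEY s hs.1 hs.2 (hIs s hs)
  -- Fubini
  have hφcont : Continuous (fun p : (Fin m → ℝ) × ℝ => p.2 * f p.1 ^ 2 * Real.exp (p.2 * f p.1)) := by
    have hfc := hf.continuous
    continuity
  have hpt_id : ∀ t, ∫ s in Set.Ioc (0:ℝ) 1, s * f t ^ 2 * Real.exp (s * f t)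
      = f t * Real.exp (f t) - Real.exp (f t) + 1 := fun t => ftc_id (f t)
  have hA_int : Integrable (fun t => f t * Real.exp (f t) - Real.exp (f t) + 1) μ := by
    exact (hint2.sub hint1).add (integrable_const (1:ℝ))
  have hprod : Integrable
      (Function.uncurry (fun t s => s * f t ^ 2 * Real.exp (s * f t)))
      (μ.prod (volume.restrict (Set.Ioc (0:ℝ) 1))) := by
    have h1f : AEStronglyMeasurable
        (Function.uncurry (fun t s => s * f t ^ 2 * Real.exp (s * f t)))
        (μ.prod (volume.restrict (Set.Ioc (0:ℝ) 1))) :=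
      hφcont.aestronglyMeasurable
    rw [integrable_prod_iff h1f]
    constructor
    · filter_upwards with t
      exact (by continuity : Continuous (fun s : ℝ => s * f t ^ 2 * Real.exp (s * f t))).integrableOn_Ioc
    · have hcongr : ∀ t, ∫ s in Set.Ioc (0:ℝ) 1, ‖s * f t ^ 2 * Real.exp (s * f t)‖
          = f t * Real.exp (f t) - Real.exp (f t) + 1 := by
        intro t
        rw [← hpt_id t]
        refine integral_congr_ae ((ae_restrict_iff' measurableSet_Ioc).2
          (Filter.Eventually.of_forall fun s hs => ?_))
        have hnn : (0:ℝ) ≤ s * f t ^ 2 * Real.exp (s * f t) :=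
          mul_nonneg (mul_nonneg hs.1.le (sq_nonneg _)) (Real.exp_pos _).le
        exact Real.norm_of_nonneg hnn
      refine (integrable_congr ?_).2 hA_int
      exact Filter.Eventually.of_forall fun t => hcongr t
  have hswap := integral_integral_swap hprod
  -- bound the s-integral
  have hG_bound : ∫ s in Set.Ioc (0:ℝ) 1, (∫ t, s * f t ^ 2 * Real.exp (s * f t) ∂μ)
      ≤ (C * a ^ 2 * ρ2 * E) / 2 := by
    have hGle : ∀ s ∈ Set.Ioc (0:ℝ) 1,
        (∫ t, s * f t ^ 2 * Real.exp (s * f t) ∂μ) ≤ s * (C * a ^ 2 * ρ2 * E) := by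
      intro s hs
      have h1 : (fun t => s * f t ^ 2 * Real.exp (s * f t))
          = fun t => s * (f t ^ 2 * Real.exp (s * f t)) := by funext t; ring
      rw [h1, integral_const_mul]
      exact mul_le_mul_of_nonneg_left (hIsle s hs) hs.1.le
    have hmono : ∫ s in Set.Ioc (0:ℝ) 1, (∫ t, s * f t ^ 2 * Real.exp (s * f t) ∂μ)
        ≤ ∫ s in Set.Ioc (0:ℝ) 1, s * (C * a ^ 2 * ρ2 * E) := by
      refine integral_mono_of_nonneg ?_ ?_ ?_
      · refine (ae_restrict_iff' measurableSet_Ioc).2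
          (Filter.Eventually.of_forall fun s hs => ?_)
        exact integral_nonneg fun t =>
          mul_nonneg (mul_nonneg hs.1.le (sq_nonneg _)) (Real.exp_pos _).le
      · exact (by continuity : Continuous (fun s : ℝ => s * (C * a ^ 2 * ρ2 * E))).integrableOn_Ioc
      · exact (ae_restrict_iff' measurableSet_Ioc).2
          (Filter.Eventually.of_forall hGle)
    have hval : ∫ s in Set.Ioc (0:ℝ) 1, s * (C * a ^ 2 * ρ2 * E)
        = (C * a ^ 2 * ρ2 * E) / 2 := by
      rw [← intervalIntegral.integral_of_le zero_le_one]
      rw [intervalIntegral.integral_mul_const]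
      simp [integral_id]
      ring
    linarith
  -- final assembly
  have hElogE : E - 1 ≤ E * Real.log E := by
    have h := Real.log_le_sub_one_of_pos (show (0:ℝ) < 1/E by positivity)
    have h2 := mul_le_mul_of_nonneg_left h hEpos.le
    rw [one_div, Real.log_inv] at h2
    have h3 : E * (E⁻¹ - 1) = 1 - E := by field_simp
    nlinarith [h2, h3]
  have hA_eq : ∫ t, (f t * Real.exp (f t) - Real.exp (f t) + 1) ∂μ
      = (∫ t, f t * Real.exp (f t) ∂μ) - E + 1 := by
    have hsub : Integrable (fun t => f t * Real.exp (f t) - Real.exp (f t)) μ := by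
      exact hint2.sub hint1
    rw [integral_add hsub (integrable_const 1), integral_sub hint2 hint1,
      integral_const, ← hEdef]
    simp [measure_univ]
  have hA_le : ∫ t, (f t * Real.exp (f t) - Real.exp (f t) + 1) ∂μ
      ≤ (C * a ^ 2 * ρ2 * E) / 2 := by
    have h1 : ∫ t, (f t * Real.exp (f t) - Real.exp (f t) + 1) ∂μ
        = ∫ t, (∫ s in Set.Ioc (0:ℝ) 1, s * f t ^ 2 * Real.exp (s * f t)) ∂μ :=
      (integral_congr_ae (Filter.Eventually.of_forall fun t => (hpt_id t).symm))
    rw [h1, hswap]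
    exact hG_bound
  have hgoal : (∫ t, f t * Real.exp (f t) ∂μ) - E + 1 ≤ (C * a ^ 2 * ρ2 * E) / 2 :=
    hA_eq ▸ hA_le
  have : (a ^ 2 * C / 2) * ρ2 * E = (C * a ^ 2 * ρ2 * E) / 2 := by ring
  rw [this]
  linarith
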